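/- Let {A_1,...,A_m} be a bimodal collection of disjoint subsets of an abelian group G with internal difference groups H_i, and suppose the indices 1 ≤ i ≤ r (with r ≥ 2) are exactly those with |A_i| < |H_i|. Fix a_i ∈ A_i for each i. Then for all i, j ≤ r with i ≠ j, (a_i + H_i) \ A_i = (a_j + H_j) \ A_j; that is, all the sets (a_i + H_i) \ A_i for i ≤ r are equal to a common nonempty set D. -/

import Mathlib

variable {G : Type*} [AddCommGroup G] [Fintype G]

/-- `N A i δ` counts the pairs `(a, b)` with `a ∈ A i`, `b ∈ A j` for some `j ≠ i`,
and `a - b = δ`. -/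
noncomputable def bimodalCount {ι : Type*} (A : ι → Set G) (i : ι) (δ : G) : ℕ :=
  {p : G × G | p.1 ∈ A i ∧ (∃ j, j ≠ i ∧ p.2 ∈ A j) ∧ p.1 - p.2 = δ}.ncard

/-- A collection of subsets has the bimodal property if every nonzero `δ` occurs as
an external difference out of `A i` either `0` or `|A i|` times. -/
def IsBimodal {ι : Type*} (A : ι → Set G) : Prop :=
  ∀ δ : G, δ ≠ 0 → ∀ i : ι,
    bimodalCount A i δ = 0 ∨ bimodalCount A i δ = (A i).ncard

/-- The internal difference group of a subset `X`: the subgroup generated by all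
differences of elements of `X`. -/
def idg (X : Set G) : AddSubgroup G :=
  AddSubgroup.closure {d : G | ∃ x ∈ X, ∃ y ∈ X, x - y = d}

/-- Pointwise form of bimodality: if one element of `A i` is moved into the "external"
set by translation by `g`, then every element of `A i` is. -/
lemma bimodal_all {ι : Type*} (A : ι → Set G)
    (hdisj : ∀ i j, i ≠ j → Disjoint (A i) (A j))
    (hbim : IsBimodal A) (i : ι) (g : G)
    {x : G} (hx : x ∈ A i) (hxg : ∃ j, j ≠ i ∧ x + g ∈ A j)
    {y : G} (hy : y ∈ A i) : ∃ j, j ≠ i ∧ y + g ∈ A j := by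
  rcases eq_or_ne g 0 with rfl | hg
  · obtain ⟨j, hj, hxj⟩ := hxg
    rw [add_zero] at hxj
    exact absurd hx (Set.disjoint_right.mp (hdisj i j (Ne.symm hj)) hxj)
  · set T : Set G := {z | z ∈ A i ∧ ∃ j, j ≠ i ∧ z + g ∈ A j} with hT
    have hmap : {p : G × G | p.1 ∈ A i ∧ (∃ j, j ≠ i ∧ p.2 ∈ A j) ∧ p.1 - p.2 = -g}
        = (fun z => (z, z + g)) '' T := by
      ext ⟨p₁, p₂⟩
      constructor
      · rintro ⟨h₁, h₂, h₃⟩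
        have h₄ : p₁ - p₂ = -g := h₃
        rw [sub_eq_iff_eq_add] at h₄
        have hp : p₂ = p₁ + g := by rw [h₄]; abel
        exact ⟨p₁, ⟨h₁, hp ▸ h₂⟩, by rw [hp]⟩
      · rintro ⟨z, ⟨hz₁, hz₂⟩, hz⟩
        obtain ⟨rfl, rfl⟩ := Prod.mk.injEq .. ▸ hz
        exact ⟨hz₁, hz₂, by show z - (z + g) = -g; abel⟩
    have hcard : bimodalCount A i (-g) = T.ncard := by
      rw [bimodalCount, hmap]
      exact Set.ncard_image_of_injective _ (fun u v huv => (Prod.mk.injEq .. ▸ huv).1)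
    rcases hbim (-g) (neg_ne_zero.mpr hg) i with h0 | hfull
    · rw [hcard] at h0
      have hTe : T = ∅ := (Set.ncard_eq_zero (Set.toFinite T)).mp h0
      exact absurd (show x ∈ T from ⟨hx, hxg⟩) (hTe ▸ Set.notMem_empty x)
    · rw [hcard] at hfull
      have hsub : T ⊆ A i := fun z hz => hz.1
      have hTA : T = A i :=
        Set.eq_of_subset_of_ncard_le hsub hfull.symm.le (Set.toFinite _)
      exact (show y ∈ T by rw [hTA]; exact hy).2

/-- The external set `B i` is invariant under translation by the internal difference
group `H i`. -/
lemma B_add_mem_iff {ι : Type*} (A : ι → Set G)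
    (hdisj : ∀ i j, i ≠ j → Disjoint (A i) (A j))
    (hbim : IsBimodal A) (i : ι)
    {h : G} (hh : h ∈ idg (A i)) :
    ∀ b : G, (∃ j, j ≠ i ∧ b ∈ A j) ↔ (∃ j, j ≠ i ∧ b + h ∈ A j) := by
  induction hh using AddSubgroup.closure_induction with
  | mem z hz =>
    obtain ⟨x, hx, y, hy, rfl⟩ := hz
    intro b
    constructor
    · intro hb
      have hb' : ∃ j, j ≠ i ∧ y + (b - y) ∈ A j := by
        rw [show y + (b - y) = b by abel]; exact hb
      have hres := bimodal_all A hdisj hbim i (b - y) hy hb' hx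
      rwa [show x + (b - y) = b + (x - y) by abel] at hres
    · intro hb
      have hb' : ∃ j, j ≠ i ∧ x + (b - y) ∈ A j := by
        rw [show x + (b - y) = b + (x - y) by abel]; exact hb
      have hres := bimodal_all A hdisj hbim i (b - y) hx hb' hy
      rwa [show y + (b - y) = b by abel] at hres
  | zero => intro b; simp
  | add z w _ _ hz hw =>
    intro b
    rw [hz b, hw (b + z), add_assoc]
  | neg z _ hz =>
    intro b
    have := (hz (b + -z)).symm
    rwa [show b + -z + z = b by abel] at this

omit [Fintype G] in
/-- Differences of elements of `X` lie in `idg X`. -/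
lemma mem_idg_of_mem {X : Set G} {x y : G} (hx : x ∈ X) (hy : y ∈ X) :
    x - y ∈ idg X :=
  AddSubgroup.subset_closure ⟨x, hx, y, hy, rfl⟩

theorem bimodal_star_common_difference {m r : ℕ} (A : Fin m → Set G)
    (hne : ∀ i, (A i).Nonempty)
    (hdisj : ∀ i j, i ≠ j → Disjoint (A i) (A j))
    (hbim : IsBimodal A)
    (hr : 2 ≤ r)
    (hlt : ∀ i : Fin m, (i : ℕ) < r ↔ (A i).ncard < Nat.card (idg (A i)))
    (a : Fin m → G) (ha : ∀ i, a i ∈ A i) :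
    (∀ i j : Fin m, (i : ℕ) < r → (j : ℕ) < r → i ≠ j →
        ((a i + ·) '' (idg (A i) : Set G)) \ A i
          = ((a j + ·) '' (idg (A j) : Set G)) \ A j) ∧
      (∀ i : Fin m, (i : ℕ) < r →
        (((a i + ·) '' (idg (A i) : Set G)) \ A i).Nonempty) := by
  -- an element of the coset `a i + H i` which is outside `A i` lies in no `A k`
  have D_notmem : ∀ (i : Fin m) (h : G), h ∈ idg (A i) → a i + h ∉ A i →
      ∀ k, a i + h ∉ A k := by
    intro i h hh hAi k hk
    rcases eq_or_ne k i with rfl | hki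
    · exact hAi hk
    · have hB : ∃ j, j ≠ i ∧ a i + h ∈ A j := ⟨k, hki, hk⟩
      obtain ⟨j, hj, hij⟩ := (B_add_mem_iff A hdisj hbim i hh (a i)).mpr hB
      exact Set.disjoint_left.mp (hdisj i j (Ne.symm hj)) (ha i) hij
  -- nonemptiness of `D i` for `i < r`
  have Dne : ∀ i : Fin m, (i : ℕ) < r →
      (((a i + ·) '' (idg (A i) : Set G)) \ A i).Nonempty := by
    intro i hi
    rw [Set.nonempty_iff_ne_empty]
    intro hempty
    have hsub : ((a i + ·) '' (idg (A i) : Set G)) ⊆ A i := Set.diff_eq_empty.mp hempty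
    have hcard : ((a i + ·) '' (idg (A i) : Set G)).ncard = Nat.card (idg (A i)) := by
      rw [Set.ncard_image_of_injective _ (add_right_injective (a i)),
        ← Nat.card_coe_set_eq]
      rfl
    have hle := Set.ncard_le_ncard hsub (Set.toFinite _)
    rw [hcard] at hle
    exact absurd ((hlt i).mp hi) (not_lt.mpr hle)
  -- key sliding lemma
  have slide : ∀ i j : Fin m, i ≠ j → ∀ h : G, h ∈ idg (A i) → h ∉ idg (A j) →
      ∀ k ∈ idg (A j), ∃ l, l ≠ j ∧ a j + k + h ∈ A l := by
    intro i j hij h hhi hhj k hk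
    have haj : ∃ l, l ≠ i ∧ a j ∈ A l := ⟨j, Ne.symm hij, ha j⟩
    obtain ⟨l, hl, hlmem⟩ := (B_add_mem_iff A hdisj hbim i hhi (a j)).mp haj
    have hlj : l ≠ j := by
      rintro rfl
      exact hhj (by simpa using mem_idg_of_mem hlmem (ha l))
    have hbase : ∃ l', l' ≠ j ∧ a j + h ∈ A l' := ⟨l, hlj, hlmem⟩
    obtain ⟨l', hl', hmem'⟩ := (B_add_mem_iff A hdisj hbim j hk (a j + h)).mp hbase
    exact ⟨l', hl', by rwa [show a j + k + h = a j + h + k by abel]⟩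
  -- main claim : if `i ≠ j`, `j < r`, then `D i ⊆ D j`
  have claim : ∀ i j : Fin m, i ≠ j → (j : ℕ) < r →
      (((a i + ·) '' (idg (A i) : Set G)) \ A i)
        ⊆ (((a j + ·) '' (idg (A j) : Set G)) \ A j) := by
    intro i j hij hjr d hd
    obtain ⟨⟨h₁, hh₁, rfl⟩, hdAi⟩ := hd
    have hdU : ∀ k, a i + h₁ ∉ A k := D_notmem i h₁ hh₁ hdAi
    -- `h₁ ∉ H j`
    have hh₁j : h₁ ∉ idg (A j) := by
      intro hc
      have haiB : ∃ l, l ≠ j ∧ a i ∈ A l := ⟨i, hij, ha i⟩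
      obtain ⟨l, hl, hlm⟩ := (B_add_mem_iff A hdisj hbim j hc (a i)).mp haiB
      exact hdU l hlm
    -- pick `d' ∈ D j`
    obtain ⟨d', hd'⟩ := Dne j hjr
    obtain ⟨⟨k₁, hk₁, rfl⟩, hd'Aj⟩ := hd'
    have hd'U : ∀ k, a j + k₁ ∉ A k := D_notmem j k₁ hk₁ hd'Aj
    -- Step 4: `d' + h₁ ∈ A i`
    obtain ⟨l, hl, hlm⟩ := slide i j hij h₁ hh₁ hh₁j k₁ hk₁
    have hli : l = i := by
      by_contra hli
      have hBi : ∃ l', l' ≠ i ∧ a j + k₁ + h₁ ∈ A l' := ⟨l, hli, hlm⟩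
      obtain ⟨l', hl', hlm'⟩ := (B_add_mem_iff A hdisj hbim i hh₁ (a j + k₁)).mpr hBi
      exact hd'U l' hlm'
    subst hli
    -- `h' := d - d' = (a l + h₁) - (a j + k₁) ∈ H l`
    have h₂ : a j + k₁ + h₁ - a l ∈ idg (A l) := mem_idg_of_mem hlm (ha l)
    have hh' : (a l + h₁) - (a j + k₁) ∈ idg (A l) := by
      have hs := sub_mem (add_mem hh₁ hh₁) h₂
      rwa [show h₁ + h₁ - (a j + k₁ + h₁ - a l) = a l + h₁ - (a j + k₁) by abel] at hs
    -- Step 5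
    by_cases hh'j : (a l + h₁) - (a j + k₁) ∈ idg (A j)
    · refine ⟨⟨k₁ + ((a l + h₁) - (a j + k₁)), add_mem hk₁ hh'j, by abel⟩, hdU j⟩
    · obtain ⟨l', hl', hlm'⟩ := slide l j hij ((a l + h₁) - (a j + k₁)) hh' hh'j k₁ hk₁
      rw [show a j + k₁ + (a l + h₁ - (a j + k₁)) = a l + h₁ by abel] at hlm'
      exact absurd hlm' (hdU l')
  exact ⟨fun i j hir hjr hij => Set.Subset.antisymm (claim i j hij hjr)
    (claim j i (Ne.symm hij) hir), Dne⟩
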